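/- Baire–Kemperman property: suppose G is a Baire space under its topology T. If A ⊆ G has the Baire property and is non-meagre, then there exists δ > 0 such that for every t with ‖t‖ < δ the set tA ∩ A has the Baire property and is non-meagre; in particular B_δ ⊆ AA⁻¹. -/

import Mathlib

open Set Topology TopologicalSpace Pointwise

lemma IsMeagre.union' {X : Type*} [TopologicalSpace X] {s t : Set X}
    (hs : IsMeagre s) (ht : IsMeagre t) : IsMeagre (s ∪ t) := by
  rw [IsMeagre, compl_union]
  exact Filter.inter_mem hs ht

lemma isMeagre_image_mulLeft {G : Type*} [Group G] [TopologicalSpace G]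
    [IsTopologicalGroup G] (t : G) {M : Set G} (hM : IsMeagre M) :
    IsMeagre ((t * ·) '' M) := by
  have h : (t * ·) '' M = (t⁻¹ * ·) ⁻¹' M := by
    ext x
    simp only [mem_image, mem_preimage]
    constructor
    · rintro ⟨a, ha, rfl⟩; simpa using ha
    · intro h; exact ⟨t⁻¹ * x, h, by group⟩
  rw [h]
  exact hM.preimage_of_isOpenMap (continuous_mul_left _) (isOpenMap_mul_left _)

lemma not_isMeagre_of_open_nonempty {X : Type*} [TopologicalSpace X]
    [BaireSpace X] {U : Set X} (hU : IsOpen U) (hne : U.Nonempty) :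
    ¬ IsMeagre U := by
  intro h
  obtain ⟨x, hx, hx'⟩ := (dense_of_mem_residual h).inter_open_nonempty U hU hne
  exact hx' hx

/-- Baire–Kemperman property: in a Baire topological group with
right-invariant metric, if `A` is Baire non-meagre then there is `δ > 0` such
that `tA ∩ A` is Baire non-meagre for `‖t‖ < δ`; in particular
`B_δ ⊆ AA⁻¹`. -/
theorem stmt_14 {G : Type*} [Group G] [MetricSpace G] [IsTopologicalGroup G]
    [BaireSpace G]
    (hd : ∀ x y z : G, dist (x * z) (y * z) = dist x y)
    (A : Set G) (hA : ∃ U : Set G, IsOpen U ∧ IsMeagre (symmDiff A U))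
    (hnm : ¬ IsMeagre A) :
    ∃ δ > (0 : ℝ),
      (∀ t : G, dist (1 : G) t < δ →
        (∃ V : Set G, IsOpen V ∧ IsMeagre (symmDiff ((t * ·) '' A ∩ A) V)) ∧
        ¬ IsMeagre ((t * ·) '' A ∩ A)) ∧
      {t : G | dist (1 : G) t < δ} ⊆ A * A⁻¹ := by
  obtain ⟨U, hUo, hUm⟩ := hA
  -- U is nonempty
  have hUne : U.Nonempty := by
    rcases U.eq_empty_or_nonempty with rfl | h
    · exact absurd (hUm.mono (by simp [symmDiff_def] : A ⊆ symmDiff A (∅ : Set G))) hnm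
    · exact h
  obtain ⟨x, hxU⟩ := hUne
  obtain ⟨r, hr, hball⟩ := Metric.isOpen_iff.mp hUo x hxU
  -- main claim, for each t with dist 1 t < r
  have key : ∀ t : G, dist (1 : G) t < r →
      (∃ V : Set G, IsOpen V ∧ IsMeagre (symmDiff ((t * ·) '' A ∩ A) V)) ∧
      ¬ IsMeagre ((t * ·) '' A ∩ A) := by
    intro t ht
    set W : Set G := (t * ·) '' U ∩ U with hW
    have hWo : IsOpen W := ((isOpenMap_mul_left t) U hUo).inter hUo
    have hWne : W.Nonempty := by
      refine ⟨t * x, ⟨x, hxU, rfl⟩, hball ?_⟩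
      have : dist (t * x) x = dist 1 t := by
        calc dist (t * x) x = dist (t * x) (1 * x) := by rw [one_mul]
          _ = dist t 1 := hd t 1 x
          _ = dist 1 t := dist_comm _ _
      simpa [Metric.mem_ball, this] using ht
    -- the symmetric difference is meagre
    have hsd : IsMeagre (symmDiff ((t * ·) '' A ∩ A) W) := by
      have h1 : IsMeagre (symmDiff ((t * ·) '' A) ((t * ·) '' U)) := by
        have : symmDiff ((t * ·) '' A) ((t * ·) '' U) = (t * ·) '' (symmDiff A U) := by
          exact (Set.image_symmDiff (mul_right_injective t) A U).symm
        rw [this]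
        exact isMeagre_image_mulLeft t hUm
      refine (h1.union' hUm).mono ?_
      intro y hy
      rw [hW] at hy
      simp only [Set.mem_union, Set.mem_symmDiff, Set.mem_inter_iff] at hy ⊢
      tauto
    refine ⟨⟨W, hWo, hsd⟩, ?_⟩
    intro hmeagre
    have : W ⊆ ((t * ·) '' A ∩ A) ∪ symmDiff ((t * ·) '' A ∩ A) W := by
      intro y hy
      by_cases h : y ∈ (t * ·) '' A ∩ A
      · exact Or.inl h
      · exact Or.inr (Set.mem_symmDiff.mpr (Or.inr ⟨hy, h⟩))
    exact not_isMeagre_of_open_nonempty hWo hWne ((hmeagre.union' hsd).mono this)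
  refine ⟨r, hr, key, ?_⟩
  intro t ht
  have hne : ((t * ·) '' A ∩ A).Nonempty := by
    rcases ((t * ·) '' A ∩ A).eq_empty_or_nonempty with h | h
    · exact absurd (h ▸ IsMeagre.empty) ((key t ht).2)
    · exact h
  obtain ⟨p, ⟨a, haA, rfl⟩, hpA⟩ := hne
  have : t = (t * a) * a⁻¹ := by group
  rw [this]
  exact Set.mul_mem_mul hpA (Set.inv_mem_inv.mpr haA)
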